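/- In the setting of the 2×2 wave group with A = [[0,1],[−μ,0]], μ ≥ 1: for a general h = (a,b), the control u(s) = ψ₁(s) + ψ₂'(s) satisfies ‖u‖²_{L²(0,t)} ≤ C(μ a² + b²)/t³ for a constant C independent of t ∈ (0,T] and of μ. -/

import Mathlib

set_option maxHeartbeats 1000000 in
private lemma quad_bound (P Q f g c1 c2 M : ℝ) (hP0 : 0 ≤ P) (hP : P ≤ c1)
    (hQ1 : -c2 ≤ Q) (hQ2 : Q ≤ c2) (hc2 : 0 ≤ c2) (hM : 0 ≤ M)
    (hf : f ^ 2 ≤ 2 * M) (hg : g ^ 2 ≤ 2 * M) :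
    (2 * P * f + Q * g) ^ 2 ≤ 8 * (c1 ^ 2 * (2 * M)) + 2 * (c2 ^ 2 * (2 * M)) := by
  have hc1 : 0 ≤ c1 := le_trans hP0 hP
  have hP2 : P ^ 2 ≤ c1 ^ 2 := by nlinarith
  have hQsq : Q ^ 2 ≤ c2 ^ 2 := by nlinarith
  have hPf : P ^ 2 * f ^ 2 ≤ c1 ^ 2 * (2 * M) :=
    mul_le_mul hP2 hf (sq_nonneg f) (by positivity)
  have hQg : Q ^ 2 * g ^ 2 ≤ c2 ^ 2 * (2 * M) :=
    mul_le_mul hQsq hg (sq_nonneg g) (by positivity)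
  nlinarith [sq_nonneg (2 * P * f - Q * g)]

set_option maxHeartbeats 1000000 in
theorem stmt_8 (T : ℝ) (hT : 0 < T) :
    ∃ C > (0:ℝ), ∀ μ t a b : ℝ, 1 ≤ μ → 0 < t → t ≤ T →
      (∫ s in (0:ℝ)..t,
          (30 * s ^ 2 * (t - s) ^ 2 / t ^ 5 *
              (-Real.sqrt μ * Real.sin (Real.sqrt μ * s) * a + Real.cos (Real.sqrt μ * s) * b) +
            deriv (fun r : ℝ =>
              30 * r ^ 2 * (t - r) ^ 2 / t ^ 5 *
                (Real.cos (Real.sqrt μ * r) * a +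
                  Real.sin (Real.sqrt μ * r) / Real.sqrt μ * b)) s) ^ 2)
        ≤ C * (μ * a ^ 2 + b ^ 2) / t ^ 3 := by
  refine ⟨225 * T ^ 2 / 4 + 900, by positivity, ?_⟩
  intro μ t a b hμ ht htT
  set m := Real.sqrt μ with hmdef
  have hμ0 : (0:ℝ) < μ := by linarith
  have hm0 : 0 < m := Real.sqrt_pos.2 hμ0
  have hm2 : m ^ 2 = μ := Real.sq_sqrt hμ0.le
  set M := μ * a ^ 2 + b ^ 2 with hMdef
  have hM : 0 ≤ M := by positivity
  -- derivative computation
  have hder : ∀ s : ℝ, HasDerivAt (fun r : ℝ =>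
      30 * r ^ 2 * (t - r) ^ 2 / t ^ 5 *
        (Real.cos (m * r) * a + Real.sin (m * r) / m * b))
      ((60 * s * (t - s) ^ 2 - 60 * s ^ 2 * (t - s)) / t ^ 5 *
        (Real.cos (m * s) * a + Real.sin (m * s) / m * b) +
       30 * s ^ 2 * (t - s) ^ 2 / t ^ 5 *
        (-m * Real.sin (m * s) * a + Real.cos (m * s) * b)) s := by
    intro s
    have hmul : HasDerivAt (fun r : ℝ => m * r) m s := by
      simpa using (hasDerivAt_id s).const_mul m
    have hcos : HasDerivAt (fun r : ℝ => Real.cos (m * r)) (-Real.sin (m * s) * m) s := by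
      simpa using! (Real.hasDerivAt_cos (m * s)).comp s hmul
    have hsin : HasDerivAt (fun r : ℝ => Real.sin (m * r)) (Real.cos (m * s) * m) s := by
      simpa using! (Real.hasDerivAt_sin (m * s)).comp s hmul
    have h1 : HasDerivAt (fun r : ℝ => r ^ 2) (2 * s) s := by
      simpa using hasDerivAt_pow 2 s
    have h2 : HasDerivAt (fun r : ℝ => (t - r) ^ 2) (2 * (t - s) * (-1)) s := by
      have h : HasDerivAt (fun r : ℝ => t - r) (-1) s := (hasDerivAt_id s).const_sub t
      simpa using! h.pow 2
    have hP : HasDerivAt (fun r : ℝ => 30 * r ^ 2 * (t - r) ^ 2 / t ^ 5)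
        ((60 * s * (t - s) ^ 2 - 60 * s ^ 2 * (t - s)) / t ^ 5) s := by
      have := ((h1.const_mul 30).mul h2).div_const (t ^ 5)
      exact this.congr_deriv (by ring)
    have hG : HasDerivAt (fun r : ℝ => Real.cos (m * r) * a + Real.sin (m * r) / m * b)
        (-m * Real.sin (m * s) * a + Real.cos (m * s) * b) s := by
      have h := (hcos.mul_const a).add ((hsin.div_const m).mul_const b)
      refine h.congr_deriv ?_
      rw [mul_div_assoc, div_self hm0.ne', mul_one]
      ring
    exact hP.mul hG
  have hrw : (∫ s in (0:ℝ)..t,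
          (30 * s ^ 2 * (t - s) ^ 2 / t ^ 5 *
              (-m * Real.sin (m * s) * a + Real.cos (m * s) * b) +
            deriv (fun r : ℝ =>
              30 * r ^ 2 * (t - r) ^ 2 / t ^ 5 *
                (Real.cos (m * r) * a + Real.sin (m * r) / m * b)) s) ^ 2)
      = ∫ s in (0:ℝ)..t,
          (2 * (30 * s ^ 2 * (t - s) ^ 2 / t ^ 5) *
              (-m * Real.sin (m * s) * a + Real.cos (m * s) * b) +
            (60 * s * (t - s) ^ 2 - 60 * s ^ 2 * (t - s)) / t ^ 5 *
              (Real.cos (m * s) * a + Real.sin (m * s) / m * b)) ^ 2 := by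
    apply intervalIntegral.integral_congr
    intro s _
    simp only [(hder s).deriv]
    ring
  rw [hrw]
  -- pointwise bound
  have key : ∀ s ∈ Set.Icc (0:ℝ) t,
      (2 * (30 * s ^ 2 * (t - s) ^ 2 / t ^ 5) *
          (-m * Real.sin (m * s) * a + Real.cos (m * s) * b) +
        (60 * s * (t - s) ^ 2 - 60 * s ^ 2 * (t - s)) / t ^ 5 *
          (Real.cos (m * s) * a + Real.sin (m * s) / m * b)) ^ 2
      ≤ 225 / (4 * t ^ 2) * M + 900 / t ^ 4 * M := by
    intro s hs
    obtain ⟨hs0, hst⟩ := hs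
    have hu0 : 0 ≤ s * (t - s) := mul_nonneg hs0 (by linarith)
    have hu : 4 * (s * (t - s)) ≤ t ^ 2 := by nlinarith [sq_nonneg (t - 2 * s)]
    have hP0 : 0 ≤ 30 * s ^ 2 * (t - s) ^ 2 / t ^ 5 := by
      have h1 : (0:ℝ) ≤ (t - s) ^ 2 := sq_nonneg _
      positivity
    have hPle : 30 * s ^ 2 * (t - s) ^ 2 / t ^ 5 ≤ 15 / (8 * t) := by
      rw [div_le_div_iff₀ (by positivity) (by positivity)]
      have h16 : 16 * (s * (t - s)) ^ 2 ≤ t ^ 2 * t ^ 2 := by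
        nlinarith [mul_le_mul hu hu (by linarith) (sq_nonneg t)]
      nlinarith [mul_le_mul_of_nonneg_left h16 (show (0:ℝ) ≤ 15 * t by positivity)]
    have h1 : s * (t - s) * (t - 2 * s) ≤ t ^ 2 / 4 * t := by
      nlinarith [mul_le_mul_of_nonneg_left (show t - 2*s ≤ t by linarith) hu0,
        mul_le_mul_of_nonneg_right hu ht.le]
    have h2 : -(t ^ 2 / 4 * t) ≤ s * (t - s) * (t - 2 * s) := by
      nlinarith [mul_le_mul_of_nonneg_left (show -t ≤ t - 2*s by linarith) hu0,
        mul_le_mul_of_nonneg_right hu ht.le]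
    have hQle : (60 * s * (t - s) ^ 2 - 60 * s ^ 2 * (t - s)) / t ^ 5 ≤ 15 / t ^ 2 := by
      rw [div_le_div_iff₀ (by positivity) (by positivity)]
      nlinarith [mul_le_mul_of_nonneg_left h1 (show (0:ℝ) ≤ 60 * t ^ 2 by positivity)]
    have hQge : -(15 / t ^ 2) ≤ (60 * s * (t - s) ^ 2 - 60 * s ^ 2 * (t - s)) / t ^ 5 := by
      have h : (-15) / t ^ 2 ≤ (60 * s * (t - s) ^ 2 - 60 * s ^ 2 * (t - s)) / t ^ 5 := by
        rw [div_le_div_iff₀ (by positivity) (by positivity)]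
        nlinarith [mul_le_mul_of_nonneg_left h2 (show (0:ℝ) ≤ 60 * t ^ 2 by positivity)]
      simpa [neg_div] using h
    have hsin1 : Real.sin (m * s) ^ 2 ≤ 1 := Real.sin_sq_le_one (m * s)
    have hcos1 : Real.cos (m * s) ^ 2 ≤ 1 := Real.cos_sq_le_one (m * s)
    have hf2 : (-m * Real.sin (m * s) * a + Real.cos (m * s) * b) ^ 2 ≤ 2 * M := by
      rw [hMdef]
      nlinarith [sq_nonneg (m * Real.sin (m * s) * a + Real.cos (m * s) * b),
        mul_nonneg (mul_nonneg (sub_nonneg.2 hsin1) (sq_nonneg m)) (sq_nonneg a),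
        mul_nonneg (sub_nonneg.2 hcos1) (sq_nonneg b), hm2]
    have hdiv2 : (Real.sin (m * s) / m) ^ 2 ≤ 1 := by
      rw [div_pow, div_le_one (by positivity)]
      nlinarith
    have hg2 : (Real.cos (m * s) * a + Real.sin (m * s) / m * b) ^ 2 ≤ 2 * M := by
      rw [hMdef]
      nlinarith [sq_nonneg (Real.cos (m * s) * a - Real.sin (m * s) / m * b),
        mul_nonneg (sub_nonneg.2 hcos1) (sq_nonneg a),
        mul_nonneg (sub_nonneg.2 hdiv2) (sq_nonneg b),
        mul_nonneg (sub_nonneg.2 hμ) (sq_nonneg a)]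
    refine le_trans (quad_bound _ _ _ _ (15 / (8 * t)) (15 / t ^ 2) M
      hP0 hPle hQge hQle (by positivity) hM hf2 hg2) ?_
    have : 8 * ((15 / (8 * t)) ^ 2 * (2 * M)) + 2 * ((15 / t ^ 2) ^ 2 * (2 * M))
        = 225 / (4 * t ^ 2) * M + 900 / t ^ 4 * M := by
      field_simp
      ring
    rw [this]
  have hcont : Continuous fun s : ℝ =>
      (2 * (30 * s ^ 2 * (t - s) ^ 2 / t ^ 5) *
          (-m * Real.sin (m * s) * a + Real.cos (m * s) * b) +
        (60 * s * (t - s) ^ 2 - 60 * s ^ 2 * (t - s)) / t ^ 5 *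
          (Real.cos (m * s) * a + Real.sin (m * s) / m * b)) ^ 2 := by
    fun_prop
  have hmono := intervalIntegral.integral_mono_on (μ := MeasureTheory.volume) ht.le
    (hcont.intervalIntegrable 0 t) (intervalIntegrable_const (c := 225 / (4 * t ^ 2) * M + 900 / t ^ 4 * M))
    (fun s hs => key s hs)
  have hconst : (∫ _ in (0:ℝ)..t, (225 / (4 * t ^ 2) * M + 900 / t ^ 4 * M))
      = t * (225 / (4 * t ^ 2) * M + 900 / t ^ 4 * M) := by
    simp only [intervalIntegral.integral_const, smul_eq_mul, sub_zero]
  refine le_trans hmono ?_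
  rw [hconst]
  have heq : t * (225 / (4 * t ^ 2) * M + 900 / t ^ 4 * M)
      = (225 * t ^ 2 / 4 + 900) * M / t ^ 3 := by
    field_simp
  rw [heq]
  gcongr
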